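/- Let V be a finite-dimensional F-vector space with a series 0 = W_0 < W_1 < ⋯ < W_n = V, and let G ≤ GL(V) satisfy (g−1)(W_i) ⊆ W_{i−1} for all g ∈ G and all i. Then G is nilpotent of class at most n−1, and every element of G satisfies (g−1)^n = 0. -/

import Mathlib

section stmt9aux

variable {F V : Type*} [Field F] [AddCommGroup V] [Module F V]
variable (W' : ℕ → Submodule F V)

/-- `g - 1` maps `W' (i + k)` into `W' i`. -/
def Stmt9P (k : ℕ) (g : V ≃ₗ[F] V) : Prop :=
  ∀ i x, x ∈ W' (i + k) → g x - x ∈ W' i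

variable {W'}

theorem stmt9_pres (h0 : W' 0 = ⊥) (hm : Monotone W') {g : V ≃ₗ[F] V}
    (hg : Stmt9P W' 1 g) : ∀ i x, x ∈ W' i → g x ∈ W' i := by
  rintro (_ | i) x hx
  · rw [h0, Submodule.mem_bot] at hx ⊢
    simp [hx]
  · have h1 := hg i x hx
    have h2 : g x = (g x - x) + x := by abel
    rw [h2]
    exact add_mem (hm (Nat.le_succ i) h1) hx

theorem stmt9_of_le (hm : Monotone W') {g : V ≃ₗ[F] V} {k l : ℕ} (hkl : l ≤ k)
    (hg : Stmt9P W' k g) : Stmt9P W' l g := fun i x hx =>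
  hg i x (hm (by omega) hx)

theorem stmt9_mul (h0 : W' 0 = ⊥) (hm : Monotone W') {g h : V ≃ₗ[F] V} {k : ℕ}
    (hg : Stmt9P W' k g) (hh : Stmt9P W' k h) (hh1 : Stmt9P W' 1 h) :
    Stmt9P W' k (g * h) := by
  intro i x hx
  have e : (g * h) x - x = (g (h x) - h x) + (h x - x) := by
    show g (h x) - x = _; abel
  rw [e]
  exact add_mem (hg i _ (stmt9_pres h0 hm hh1 _ _ hx)) (hh i x hx)

theorem stmt9_inv (h0 : W' 0 = ⊥) (hm : Monotone W') {g : V ≃ₗ[F] V} {k : ℕ}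
    (hg : Stmt9P W' k g) (hg1 : Stmt9P W' 1 g⁻¹) : Stmt9P W' k g⁻¹ := by
  intro i x hx
  have hy : g⁻¹ x ∈ W' (i + k) := stmt9_pres h0 hm hg1 _ _ hx
  have h1 := hg i (g⁻¹ x) hy
  have e : g (g⁻¹ x) = x := g.apply_symm_apply x
  rw [e] at h1
  have e2 : g⁻¹ x - x = -(x - g⁻¹ x) := by abel
  rw [e2]
  exact neg_mem h1

theorem stmt9_comm (h0 : W' 0 = ⊥) (hm : Monotone W') {g h : V ≃ₗ[F] V} {k : ℕ}
    (hg : Stmt9P W' k g) (hh : Stmt9P W' 1 h)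
    (hg1 : Stmt9P W' 1 g⁻¹) (hh1 : Stmt9P W' 1 h⁻¹) :
    Stmt9P W' (k + 1) (g * h * g⁻¹ * h⁻¹) := by
  intro i x hx
  set y := g⁻¹ (h⁻¹ x) with hy
  have hyx : x = h (g y) := by
    rw [hy]
    show x = h (g (g⁻¹ (h⁻¹ x)))
    rw [show g (g⁻¹ (h⁻¹ x)) = h⁻¹ x from g.apply_symm_apply _,
        show h (h⁻¹ x) = x from h.apply_symm_apply _]
  have hymem : y ∈ W' (i + (k + 1)) :=
    stmt9_pres h0 hm hg1 _ _ (stmt9_pres h0 hm hh1 _ _ hx)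
  have hby : h y - y ∈ W' (i + k) := hh (i + k) y hymem
  have haby : g (h y - y) - (h y - y) ∈ W' i := hg i _ hby
  have hay : g y - y ∈ W' (i + 1) := hg (i + 1) y (by rwa [show i + 1 + k = i + (k+1) by omega])
  have hbay : h (g y - y) - (g y - y) ∈ W' i := hh i _ hay
  have e : (g * h * g⁻¹ * h⁻¹) x - x
      = (g (h y - y) - (h y - y)) - (h (g y - y) - (g y - y)) := by
    show g (h (g⁻¹ (h⁻¹ x))) - x = _
    rw [← hy]
    conv_lhs => rw [hyx]
    simp only [map_sub]
    abel
  rw [e]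
  exact sub_mem haby hbay

theorem stmt9_pow {g : V ≃ₗ[F] V}
    (hg : Stmt9P W' 1 g) :
    ∀ k i x, x ∈ W' (i + k) → (((g : V →ₗ[F] V) - 1) ^ k) x ∈ W' i := by
  intro k
  induction k with
  | zero => intro i x hx; simpa using hx
  | succ k ih =>
    intro i x hx
    have e : (((g : V →ₗ[F] V) - 1) ^ (k + 1)) x
        = (((g : V →ₗ[F] V) - 1) ^ k) (g x - x) := by
      rw [pow_succ, Module.End.mul_apply]
      rfl
    rw [e]
    exact ih i (g x - x) (hg (i + k) x (by rwa [show i + k + 1 = i + (k+1) by omega]))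

end stmt9aux

/-- If a subgroup `G ≤ GL(V)` of a finite-dimensional space `V`
stabilizes a series `⊥ = W 0 ≤ ⋯ ≤ W n = ⊤` (i.e. `(g-1)(W i.succ) ⊆ W i` for all
`g ∈ G`), then `G` is nilpotent of class at most `n - 1` and every `g ∈ G`
satisfies `(g - 1)^n = 0`. -/
theorem stmt9 {F V : Type*} [Field F] [AddCommGroup V] [Module F V]
    [FiniteDimensional F V]
    (n : ℕ) (W : Fin (n + 1) → Submodule F V)
    (h0 : W 0 = ⊥) (htop : W (Fin.last n) = ⊤) (hmono : Monotone W)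
    (G : Subgroup (V ≃ₗ[F] V))
    (hstab : ∀ g ∈ G, ∀ i : Fin n, ∀ x ∈ W i.succ, g x - x ∈ W i.castSucc) :
    Group.IsNilpotent G ∧ lowerCentralSeries G (n - 1) = ⊥ ∧
    ∀ g ∈ G, ((g : V →ₗ[F] V) - 1) ^ n = 0 := by
  -- ℕ-indexed version of the filtration
  set W' : ℕ → Submodule F V := fun j => W ⟨min j n, by omega⟩ with hW'
  have hW0 : W' 0 = ⊥ := by
    rw [hW']; convert h0 using 2; ext; simp
  have hWmono : Monotone W' := by
    intro a b hab
    exact hmono (by simp [Fin.le_def]; omega)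
  have hWtop : ∀ j, n ≤ j → W' j = ⊤ := by
    intro j hj
    rw [hW']
    convert htop using 2
    ext
    simp [Fin.last]
    omega
  -- G satisfies the one-step property
  have hstab1 : ∀ g ∈ G, Stmt9P W' 1 g := by
    intro g hg i x hx
    rcases lt_or_ge i n with hi | hi
    · have e1 : W' (i + 1) = W ((⟨i, hi⟩ : Fin n).succ) := by
        show W ⟨min (i + 1) n, by omega⟩ = _
        congr 1; apply Fin.ext; simp; omega
      have e2 : W' i = W ((⟨i, hi⟩ : Fin n).castSucc) := by
        show W ⟨min i n, by omega⟩ = _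
        congr 1; apply Fin.ext; simp; omega
      rw [e2]
      exact hstab g hg ⟨i, hi⟩ x (e1 ▸ hx)
    · rw [hWtop i hi]; trivial
  -- key subgroups
  have Kmem : ∀ (k : ℕ) (g : G), Prop := fun k g => Stmt9P W' k (g : V ≃ₗ[F] V)
  set K : ℕ → Subgroup G := fun k =>
    { carrier := {g : G | Stmt9P W' k (g : V ≃ₗ[F] V)}
      one_mem' := by intro i x hx; simp [hW0]
      mul_mem' := by
        intro a b ha hb
        exact stmt9_mul hW0 hWmono ha hb (hstab1 _ b.2)
      inv_mem' := by
        intro a ha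
        exact stmt9_inv hW0 hWmono ha (hstab1 _ (inv_mem a.2)) } with hK
  have hLCS : ∀ k, lowerCentralSeries G k ≤ (K (k + 1)).map G.subtype := by
    intro k
    induction k with
    | zero => intro g hg; exact ⟨⟨g, hg⟩, hstab1 _ hg, rfl⟩
    | succ k ih =>
      show ⁅lowerCentralSeries G k, G⁆ ≤ _
      rw [Subgroup.commutator_le]
      intro p' hp' q' hq'
      obtain ⟨p, hp, rfl⟩ := ih hp'
      set q : G := ⟨q', hq'⟩
      refine ⟨p * q * p⁻¹ * q⁻¹, ?_, rfl⟩
      show Stmt9P W' (k + 2) ((p * q * p⁻¹ * q⁻¹ : G) : V ≃ₗ[F] V)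
      have e : ((p * q * p⁻¹ * q⁻¹ : G) : V ≃ₗ[F] V)
          = (p : V ≃ₗ[F] V) * q * (p : V ≃ₗ[F] V)⁻¹ * (q : V ≃ₗ[F] V)⁻¹ := by
        push_cast; rfl
      rw [e]
      exact stmt9_comm hW0 hWmono hp (hstab1 _ q.2)
        (hstab1 _ (inv_mem p.2)) (hstab1 _ (inv_mem q.2))
  -- Stmt9P n forces identity
  have hPn : ∀ g : V ≃ₗ[F] V, Stmt9P W' n g → g = 1 := by
    intro g hg
    ext x
    have hx : x ∈ W' (0 + n) := by
      rw [zero_add, hWtop n le_rfl]; trivial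
    have := hg 0 x hx
    rw [hW0, Submodule.mem_bot, sub_eq_zero] at this
    simpa using this
  have hbot : lowerCentralSeries G (n - 1) = ⊥ := by
    rw [eq_bot_iff]
    intro g hg
    obtain ⟨g, hgK, rfl⟩ := hLCS (n - 1) hg
    have hgK : Stmt9P W' (n - 1 + 1) (g : V ≃ₗ[F] V) := hgK
    have hgn : Stmt9P W' n (g : V ≃ₗ[F] V) :=
      stmt9_of_le hWmono (by omega) hgK
    have := hPn _ hgn
    simp only [Subgroup.mem_bot]
    ext x
    have := congrFun (congrArg DFunLike.coe this) x
    simpa using this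
  refine ⟨(Subgroup.isNilpotent_iff_lowerCentralSeries G).mpr ⟨n - 1, hbot⟩, hbot, ?_⟩
  intro g hg
  ext x
  have hx : x ∈ W' (0 + n) := by rw [zero_add, hWtop n le_rfl]; trivial
  have := stmt9_pow (hstab1 g hg) n 0 x hx
  rw [hW0, Submodule.mem_bot] at this
  simpa using this
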